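/- Let E be a finite universe, 𝒳 a family of subsets of E, e ∈ E, and τ ≥ 1 an integer. Suppose there exist sets S₁, …, S_r ∈ 𝒳 with r ≤ τ (the petals of e) such that every element x ∈ E lying together with e in some set of 𝒳 belongs to some S_i. Let C ⊆ E be a set of anchors such that no set of 𝒳 contains two distinct elements of C, and suppose each anchor a ∈ C is assigned a family petals(a) ⊆ {S ∈ 𝒳 : a ∈ S} with |petals(a)| ≤ τ. Then the number of sets in ⋃_{a∈C} petals(a) that contain e is at most τ². (This yields the τ² primal-slackness bound in the reverse-delete phase of the parallel algorithm.) -/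

import Mathlib

/-- The `τ²` bound of the reverse-delete phase: if `e` has at most `τ` petals
`R ⊆ 𝒳` (sets of `𝒳` containing `e` covering every element sharing a set of `𝒳`
with `e`), `C` is a set of pairwise independent anchors, and each anchor `a ∈ C`
is assigned at most `τ` petals (sets of `𝒳` containing `a`), then at most `τ²`
of the sets in the union of the anchors' petals contain `e`. -/
theorem petals_containing_e_le_tau_sq {α : Type*} [Fintype α] [DecidableEq α]
    (𝒳 : Finset (Finset α)) (e : α) (τ : ℕ) (hτ : 1 ≤ τ)
    (R : Finset (Finset α)) (hR𝒳 : R ⊆ 𝒳) (hRe : ∀ S ∈ R, e ∈ S)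
    (hRcard : R.card ≤ τ)
    (hpetal : ∀ x : α, (∃ S ∈ 𝒳, e ∈ S ∧ x ∈ S) → ∃ S ∈ R, x ∈ S)
    (C : Finset α)
    (hind : ∀ S ∈ 𝒳, ∀ a ∈ C, ∀ b ∈ C, a ∈ S → b ∈ S → a = b)
    (petals : α → Finset (Finset α))
    (hpet𝒳 : ∀ a ∈ C, ∀ S ∈ petals a, S ∈ 𝒳 ∧ a ∈ S)
    (hpetcard : ∀ a ∈ C, (petals a).card ≤ τ) :
    ((C.biUnion petals).filter (fun S => e ∈ S)).card ≤ τ ^ 2 := by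
  classical
  set C' : Finset α := C.filter (fun a => ∃ S ∈ petals a, e ∈ S) with hC'
  have hsub : ((C.biUnion petals).filter (fun S => e ∈ S)) ⊆ C'.biUnion petals := by
    intro S hS
    simp only [Finset.mem_filter, Finset.mem_biUnion] at hS ⊢
    obtain ⟨⟨a, ha, haS⟩, heS⟩ := hS
    exact ⟨a, Finset.mem_filter.mpr ⟨ha, S, haS, heS⟩, haS⟩
  have hC'card : C'.card ≤ τ := by
    -- map each a ∈ C' to a set in R containing a, injectively
    have hex : ∀ a ∈ C', ∃ S ∈ R, a ∈ S := by
      intro a ha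
      rw [hC', Finset.mem_filter] at ha
      obtain ⟨haC, S, hS, heS⟩ := ha
      obtain ⟨hS𝒳, haS⟩ := hpet𝒳 a haC S hS
      exact hpetal a ⟨S, hS𝒳, heS, haS⟩
    choose f hfR hfa using hex
    have := Finset.card_le_card_of_injOn (s := C') (t := R) (fun a => if h : a ∈ C' then f a h else ∅)
      (fun a ha => by rw [Finset.mem_coe] at ha; simp only [dif_pos ha, Finset.mem_coe]; exact hfR a ha)
      (fun a ha b hb hab => by
        simp only [Finset.mem_coe] at ha hb
        simp only [dif_pos ha, dif_pos hb] at hab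
        have haC : a ∈ C := Finset.mem_of_mem_filter a ha
        have hbC : b ∈ C := Finset.mem_of_mem_filter b hb
        exact hind (f a ha) (hR𝒳 (hfR a ha)) a haC b hbC (hfa a ha)
          (hab ▸ hfa b hb))
    exact this.trans hRcard
  calc ((C.biUnion petals).filter (fun S => e ∈ S)).card
      ≤ (C'.biUnion petals).card := Finset.card_le_card hsub
    _ ≤ ∑ a ∈ C', (petals a).card := Finset.card_biUnion_le
    _ ≤ ∑ a ∈ C', τ := Finset.sum_le_sum (fun a ha =>
        hpetcard a (Finset.mem_of_mem_filter a ha))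
    _ = C'.card * τ := by rw [Finset.sum_const, smul_eq_mul]
    _ ≤ τ * τ := Nat.mul_le_mul_right τ hC'card
    _ = τ ^ 2 := (sq τ).symm
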